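/- arXiv:2312.17635 — 2 statements merged into one kernel-verified Lean document; each statement's English description precedes it below -/
import Mathlib

section
/- Let K ⊂ ℝⁿ be nonempty compact and t > 0. Then the open set U = K + B(0, t) is interior-ball regular with radius t: for every x ∈ ∂U there exists y ∈ U with ‖x − y‖ = t and B(y, t) ⊆ U. -/
open Metric Set Pointwise

theorem stmt5 (n : ℕ) (K : Set (EuclideanSpace ℝ (Fin n)))
    (hKne : K.Nonempty) (hKc : IsCompact K) (t : ℝ) (ht : 0 < t) :
    ∀ x ∈ frontier (K + ball (0 : EuclideanSpace ℝ (Fin n)) t),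
      ∃ y ∈ K + ball (0 : EuclideanSpace ℝ (Fin n)) t,
        ‖x - y‖ = t ∧ ball y t ⊆ K + ball (0 : EuclideanSpace ℝ (Fin n)) t := by
  intro x hx
  have hU : IsOpen (K + ball (0 : EuclideanSpace ℝ (Fin n)) t) := isOpen_ball.add_left
  rw [hU.frontier_eq] at hx
  obtain ⟨hxc, hxn⟩ := hx
  have h1 : closure (K + ball (0 : EuclideanSpace ℝ (Fin n)) t)
      ⊆ K + closedBall (0 : EuclideanSpace ℝ (Fin n)) t :=
    closure_minimal (add_subset_add_left ball_subset_closedBall)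
      (hKc.add (isCompact_closedBall _ _)).isClosed
  obtain ⟨k, hk, v, hv, hkv⟩ := h1 hxc
  have hvt : ‖v‖ = t := by
    rcases lt_or_eq_of_le (mem_closedBall_zero_iff.mp hv) with h | h
    · exact absurd ⟨k, hk, v, mem_ball_zero_iff.mpr h, hkv⟩ hxn
    · exact h
  refine ⟨k, ⟨k, hk, 0, by simpa using ht, add_zero k⟩, ?_, ?_⟩
  · rw [← hkv]; simpa using hvt
  · intro z hz
    exact ⟨k, hk, z - k, by simpa [mem_ball_zero_iff, ← dist_eq_norm] using hz, add_sub_cancel k z⟩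
end

section
/- Let 0 < α_* ≤ α* and κ₀ ∈ (0,1], and set κ = α_* κ₀ / (2α* + α_*). Let U ⊂ ℝⁿ be open and bounded, K ⊂ U, x̄ ∈ K, x ∈ U. Suppose: (i) ρ : [0, L] → U is a unit-speed curve with ρ(0) = x, ρ(L) = x̄, and d(ρ(r), ∂U) ≥ (α_*/α*) r for all r ∈ [0, L]; (ii) ρ₀ : [0, L₀] → K is a unit-speed curve with ρ₀(0) = x̄, ρ₀(L₀) = x₀, and d(ρ₀(s), ∂K) ≥ κ₀ s for all s ∈ [0, L₀]; (iii) K ⊂ U so that d(y, ∂U) ≥ d(y, ∂K) for y ∈ K. Then the concatenated curve ρ̃ : [0, L + L₀] → U, equal to ρ(s) on [0, L] and ρ₀(s − L) on (L, L + L₀], satisfies d(ρ̃(s), ∂U) ≥ κ s for all s ∈ [0, L + L₀]. -/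
open Metric Set

set_option maxHeartbeats 1000000 in
theorem stmt10 (n : ℕ) (αs αst : ℝ) (hαs : 0 < αs) (hαα : αs ≤ αst)
    (κ₀ : ℝ) (hκ₀ : 0 < κ₀) (hκ₀1 : κ₀ ≤ 1)
    (κ : ℝ) (hκ : κ = αs * κ₀ / (2 * αst + αs))
    (U K : Set (EuclideanSpace ℝ (Fin n)))
    (hUop : IsOpen U) (hUbd : Bornology.IsBounded U) (hKU : K ⊆ U)
    (xb x₀ x : EuclideanSpace ℝ (Fin n)) (hxb : xb ∈ K) (hx : x ∈ U)
    (L : ℝ) (hL : 0 ≤ L) (ρ : ℝ → EuclideanSpace ℝ (Fin n))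
    (hlip : LipschitzOnWith 1 ρ (Icc 0 L))
    (hρU : ∀ r ∈ Icc 0 L, ρ r ∈ U)
    (hρ0 : ρ 0 = x) (hρL : ρ L = xb)
    (hρdist : ∀ r ∈ Icc 0 L, (αs / αst) * r ≤ infDist (ρ r) (frontier U))
    (L₀ : ℝ) (hL₀ : 0 ≤ L₀) (ρ₀ : ℝ → EuclideanSpace ℝ (Fin n))
    (hlip₀ : LipschitzOnWith 1 ρ₀ (Icc 0 L₀))
    (hρ₀K : ∀ s ∈ Icc 0 L₀, ρ₀ s ∈ K)
    (hρ₀0 : ρ₀ 0 = xb) (hρ₀L : ρ₀ L₀ = x₀)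
    (hρ₀dist : ∀ s ∈ Icc 0 L₀, κ₀ * s ≤ infDist (ρ₀ s) (frontier K))
    (hKfr : ∀ y ∈ K, infDist y (frontier K) ≤ infDist y (frontier U))
    (ρt : ℝ → EuclideanSpace ℝ (Fin n))
    (hρt : ∀ s, ρt s = if s ≤ L then ρ s else ρ₀ (s - L)) :
    ∀ s ∈ Icc 0 (L + L₀), κ * s ≤ infDist (ρt s) (frontier U) := by

  have hαst : 0 < αst := lt_of_lt_of_le hαs hαα
  have hden : 0 < 2 * αst + αs := by linarith
  have hκpos : 0 < κ := by
    rw [hκ]; positivity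
  intro s hs
  rw [hρt s]
  split_ifs with h
  · -- s ≤ L
    have h1 := hρdist s ⟨hs.1, h⟩
    have hκle : κ ≤ αs / αst := by
      rw [hκ, div_le_div_iff₀ hden hαst]
      nlinarith [mul_pos hαs hαst]
    nlinarith [hs.1]
  · -- s > L
    push_neg at h
    set t := s - L with htdef
    clear_value t
    have ht0 : 0 < t := by simp [htdef]; linarith
    have htL : t ≤ L₀ := by simp [htdef]; linarith [hs.2]
    have htmem : t ∈ Icc 0 L₀ := ⟨le_of_lt ht0, htL⟩
    have hD1 : κ₀ * t ≤ infDist (ρ₀ t) (frontier U) :=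
      (hρ₀dist t htmem).trans (hKfr _ (hρ₀K t htmem))
    have hdist : dist xb (ρ₀ t) ≤ t := by
      rw [← hρ₀0]
      have := (lipschitzOnWith_iff_dist_le_mul.mp hlip₀) 0
        (show (0:ℝ) ∈ Icc 0 L₀ by constructor <;> linarith) t htmem
      simpa [Real.dist_eq, abs_of_pos ht0] using this
    have hxbU : (αs / αst) * L ≤ infDist xb (frontier U) := by
      have := hρdist L ⟨hL, le_refl L⟩
      rwa [hρL] at this
    have hD2 : (αs / αst) * L - t ≤ infDist (ρ₀ t) (frontier U) := by
      have := infDist_le_infDist_add_dist (x := xb) (y := ρ₀ t) (s := frontier U)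
      linarith
    rcases le_or_gt (κ * s) (κ₀ * t) with hc | hc
    · linarith
    · -- κ₀ * t < κ * s, with s = L + t
      have hseq : s = L + t := by simp [htdef]
      rw [hseq] at hc ⊢
      have key : κ * (L + t) ≤ (αs / αst) * L - t := by
        have hrhs : αs / αst * L - t = (αs * L - αst * t) / αst := by
          field_simp
        rw [hκ] at hc ⊢
        rw [div_mul_eq_mul_div, lt_div_iff₀ hden] at hc
        have hX : 0 < κ₀ * (αs * L - 2 * αst * t) := by nlinarith [hc]
        have h2 : 0 < αs * L - 2 * αst * t := (mul_pos_iff_of_pos_left hκ₀).mp hX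
        rw [hrhs, div_mul_eq_mul_div, div_le_div_iff₀ hden hαst]
        have c1 : 0 ≤ αs * (αs * L - 2 * αst * t) := mul_nonneg hαs.le h2.le
        have c2 : 0 ≤ κ₀ * αs * (αs * L - 2 * αst * t) :=
          mul_nonneg (mul_nonneg hκ₀.le hαs.le) h2.le
        have c3 : 0 ≤ αst * (αs * L - 2 * αst * t) := mul_nonneg hαst.le h2.le
        have c4 : 0 ≤ (1 - κ₀) * (αst * αs * L) :=
          mul_nonneg (by linarith) (by positivity)
        have c5 : 0 ≤ (1 - κ₀) * (αs * αs * L) :=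
          mul_nonneg (by linarith) (by positivity)
        linarith [c1, c2, c3, c4, c5]
      linarith
end
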